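/- arXiv:1804.08168 — 2 statements merged into one kernel-verified Lean document; each statement's English description precedes it below -/
import Mathlib

section
/- Fix an integer N ≥ 2, a constant T_s > 0, strictly positive reals r_1, …, r_N and reals θ_1, …, θ_N with Σ_{1≤j<k≤N} sin²(θ_j − θ_k) > 0. Let r_min = min_k r_k and r_max = max_k r_k. Then N·r_min² / (T_s Σ_{1≤j<k≤N} sin²(θ_j − θ_k)) ≤ S(r,θ) ≤ N·r_max² / (T_s Σ_{1≤j<k≤N} sin²(θ_j − θ_k)), where S(r,θ) = (Σ_{k=1}^N r_k^{-2}) / (T_s Σ_{1≤j<k≤N} r_j^{-2} r_k^{-2} sin²(θ_j − θ_k)). -/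
open Finset

section aux
variable {N : ℕ}

noncomputable def myP (θ w : Fin N → ℝ) : ℝ := ∑ k, w k * Real.cos (θ k) ^ 2
noncomputable def myQ (θ w : Fin N → ℝ) : ℝ := ∑ k, w k * Real.sin (θ k) ^ 2
noncomputable def myR (θ w : Fin N → ℝ) : ℝ := ∑ k, w k * (Real.sin (θ k) * Real.cos (θ k))
noncomputable def myD (θ w : Fin N → ℝ) : ℝ :=
  ∑ j, ∑ k ∈ Finset.univ.filter (fun k => j < k), w j * w k * Real.sin (θ j - θ k) ^ 2
noncomputable def myE (θ : Fin N → ℝ) (i : Fin N) (w : Fin N → ℝ) : ℝ :=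
  Real.cos (θ i) ^ 2 * myQ θ w + Real.sin (θ i) ^ 2 * myP θ w
    - 2 * (Real.sin (θ i) * Real.cos (θ i)) * myR θ w

lemma sum_upd (w g : Fin N → ℝ) (i : Fin N) (a : ℝ) :
    ∑ k, Function.update w i a k * g k = (∑ k, w k * g k) + (a - w i) * g i := by
  have h : ∀ k, Function.update w i a k * g k
      = w k * g k + (if k = i then (a - w i) * g i else 0) := by
    intro k
    by_cases hk : k = i
    · subst hk; simp [Function.update_self]; ring
    · rw [Function.update_of_ne hk, if_neg hk]; ring
  simp only [h, Finset.sum_add_distrib, Finset.sum_ite_eq' Finset.univ i, Finset.mem_univ,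
    if_true]

lemma sum_upd' (w : Fin N → ℝ) (i : Fin N) (a : ℝ) :
    ∑ k, Function.update w i a k = (∑ k, w k) + (a - w i) := by
  have := sum_upd w (fun _ => 1) i a
  simpa using this

lemma sum_eq_PQ (θ w : Fin N → ℝ) : ∑ k, w k = myP θ w + myQ θ w := by
  rw [myP, myQ, ← Finset.sum_add_distrib]
  refine Finset.sum_congr rfl fun k _ => ?_
  have := Real.sin_sq_add_cos_sq (θ k)
  linear_combination (-(w k)) * this

lemma lagrange_full (θ w : Fin N → ℝ) :
    ∑ j, ∑ k, w j * w k * Real.sin (θ j - θ k) ^ 2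
      = 2 * (myP θ w * myQ θ w - myR θ w ^ 2) := by
  have expand : ∀ j k : Fin N, w j * w k * Real.sin (θ j - θ k) ^ 2
      = (w j * Real.sin (θ j) ^ 2) * (w k * Real.cos (θ k) ^ 2)
        + (w j * Real.cos (θ j) ^ 2) * (w k * Real.sin (θ k) ^ 2)
        - 2 * ((w j * (Real.sin (θ j) * Real.cos (θ j)))
            * (w k * (Real.sin (θ k) * Real.cos (θ k)))) := by
    intro j k
    rw [Real.sin_sub]
    ring
  have hA : ∑ j : Fin N, ∑ k : Fin N,
      (w j * Real.sin (θ j) ^ 2) * (w k * Real.cos (θ k) ^ 2) = myQ θ w * myP θ w :=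
    (Finset.sum_mul_sum _ _ _ _).symm
  have hB : ∑ j : Fin N, ∑ k : Fin N,
      (w j * Real.cos (θ j) ^ 2) * (w k * Real.sin (θ k) ^ 2) = myP θ w * myQ θ w :=
    (Finset.sum_mul_sum _ _ _ _).symm
  have hC : ∑ j : Fin N, ∑ k : Fin N,
      (w j * (Real.sin (θ j) * Real.cos (θ j)))
        * (w k * (Real.sin (θ k) * Real.cos (θ k))) = myR θ w * myR θ w :=
    (Finset.sum_mul_sum _ _ _ _).symm
  calc ∑ j, ∑ k, w j * w k * Real.sin (θ j - θ k) ^ 2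
      = ∑ j : Fin N, ∑ k : Fin N,
        ((w j * Real.sin (θ j) ^ 2) * (w k * Real.cos (θ k) ^ 2)
        + (w j * Real.cos (θ j) ^ 2) * (w k * Real.sin (θ k) ^ 2)
        - 2 * ((w j * (Real.sin (θ j) * Real.cos (θ j)))
            * (w k * (Real.sin (θ k) * Real.cos (θ k))))) := by
        exact Finset.sum_congr rfl fun j _ => Finset.sum_congr rfl fun k _ => expand j k
    _ = (∑ j : Fin N, ∑ k : Fin N,
          (w j * Real.sin (θ j) ^ 2) * (w k * Real.cos (θ k) ^ 2))
        + (∑ j : Fin N, ∑ k : Fin N,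
          (w j * Real.cos (θ j) ^ 2) * (w k * Real.sin (θ k) ^ 2))
        - 2 * ∑ j : Fin N, ∑ k : Fin N,
          (w j * (Real.sin (θ j) * Real.cos (θ j)))
            * (w k * (Real.sin (θ k) * Real.cos (θ k))) := by
        simp only [Finset.sum_add_distrib, Finset.sum_sub_distrib, Finset.mul_sum]
    _ = 2 * (myP θ w * myQ θ w - myR θ w ^ 2) := by
        rw [hA, hB, hC]; ring

lemma two_myD (θ w : Fin N → ℝ) :
    ∑ j, ∑ k, w j * w k * Real.sin (θ j - θ k) ^ 2 = 2 * myD θ w := by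
  set F : Fin N → Fin N → ℝ := fun j k => w j * w k * Real.sin (θ j - θ k) ^ 2 with hF
  have hsym : ∀ j k, F j k = F k j := by
    intro j k
    simp only [hF]
    rw [show θ k - θ j = -(θ j - θ k) by ring, Real.sin_neg]
    ring
  have hdiag : ∀ j, F j j = 0 := by
    intro j; simp [hF]
  have split : ∀ j k : Fin N, F j k
      = (if j < k then F j k else 0) + (if k < j then F j k else 0) := by
    intro j k
    rcases lt_trichotomy j k with h | h | h
    · simp [h, not_lt_of_gt h]
    · subst h; simp [hdiag]
    · simp [h, not_lt_of_gt h]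
  have hswap : ∑ j : Fin N, ∑ k : Fin N, (if k < j then F j k else 0)
      = ∑ j : Fin N, ∑ k : Fin N, (if j < k then F j k else 0) := by
    rw [Finset.sum_comm]
    refine Finset.sum_congr rfl fun j _ => Finset.sum_congr rfl fun k _ => ?_
    rw [hsym]
  have hfilter : myD θ w = ∑ j : Fin N, ∑ k : Fin N, (if j < k then F j k else 0) := by
    rw [myD]
    exact Finset.sum_congr rfl fun j _ => (Finset.sum_filter _ _)
  calc ∑ j, ∑ k, F j k
      = ∑ j : Fin N, ∑ k : Fin N,
          ((if j < k then F j k else 0) + (if k < j then F j k else 0)) := by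
        exact Finset.sum_congr rfl fun j _ => Finset.sum_congr rfl fun k _ => split j k
    _ = (∑ j : Fin N, ∑ k : Fin N, (if j < k then F j k else 0))
        + ∑ j : Fin N, ∑ k : Fin N, (if k < j then F j k else 0) := by
        simp only [Finset.sum_add_distrib]
    _ = 2 * myD θ w := by rw [hswap, hfilter]; ring

lemma myD_eq (θ w : Fin N → ℝ) : myD θ w = myP θ w * myQ θ w - myR θ w ^ 2 := by
  have h1 := lagrange_full θ w
  have h2 := two_myD θ w
  linarith

section aux2
variable {N : ℕ}

lemma myP_upd (θ w : Fin N → ℝ) (i : Fin N) (a : ℝ) :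
    myP θ (Function.update w i a) = myP θ w + (a - w i) * Real.cos (θ i) ^ 2 :=
  sum_upd w (fun k => Real.cos (θ k) ^ 2) i a

lemma myQ_upd (θ w : Fin N → ℝ) (i : Fin N) (a : ℝ) :
    myQ θ (Function.update w i a) = myQ θ w + (a - w i) * Real.sin (θ i) ^ 2 :=
  sum_upd w (fun k => Real.sin (θ k) ^ 2) i a

lemma myR_upd (θ w : Fin N → ℝ) (i : Fin N) (a : ℝ) :
    myR θ (Function.update w i a) = myR θ w + (a - w i) * (Real.sin (θ i) * Real.cos (θ i)) :=
  sum_upd w (fun k => Real.sin (θ k) * Real.cos (θ k)) i a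

lemma myD_upd (θ u : Fin N → ℝ) (i : Fin N) (t : ℝ) :
    myD θ (Function.update u i (u i + t)) = myD θ u + t * myE θ i u := by
  rw [myD_eq, myD_eq, myP_upd, myQ_upd, myR_upd, myE]
  ring

lemma key_ineq (θ u : Fin N → ℝ) (i : Fin N) :
    myD θ u ≤ (∑ k, u k) * myE θ i u := by
  rw [myD_eq, sum_eq_PQ θ u, myE]
  set P := myP θ u; set Q := myQ θ u; set R := myR θ u
  set x := Real.sin (θ i); set c := Real.cos (θ i)
  have h : x ^ 2 + c ^ 2 = 1 := Real.sin_sq_add_cos_sq (θ i)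
  have hid : (P + Q) * (c ^ 2 * Q + x ^ 2 * P - 2 * (x * c) * R) - (P * Q - R ^ 2)
      = (x * P - c * R) ^ 2 + (c * Q - x * R) ^ 2 := by
    linear_combination (P * Q - R ^ 2) * h
  nlinarith [sq_nonneg (x * P - c * R), sq_nonneg (c * Q - x * R)]

lemma myD_mono (θ v w : Fin N → ℝ) (hv : ∀ k, 0 ≤ v k) (hvw : ∀ k, v k ≤ w k) :
    myD θ v ≤ myD θ w := by
  refine Finset.sum_le_sum fun j _ => Finset.sum_le_sum fun k _ => ?_
  have h1 : v j * v k ≤ w j * w k :=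
    mul_le_mul (hvw j) (hvw k) (hv k) (le_trans (hv j) (hvw j))
  exact mul_le_mul_of_nonneg_right h1 (sq_nonneg _)

lemma chain_ineq (θ v w : Fin N → ℝ) (hv : ∀ k, 0 ≤ v k) (hvw : ∀ k, v k ≤ w k)
    (hDv : 0 < myD θ v) :
    (∑ k, w k) / myD θ w ≤ (∑ k, v k) / myD θ v := by
  have main : ∀ I : Finset (Fin N),
      (∑ k, (if k ∈ I then w k else v k)) / myD θ (fun k => if k ∈ I then w k else v k)
        ≤ (∑ k, v k) / myD θ v := by
    intro I
    induction I using Finset.induction_on with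
    | empty => simp
    | @insert a I ha ih =>
      set u : Fin N → ℝ := fun k => if k ∈ I then w k else v k with hu_def
      set t : ℝ := w a - v a with ht_def
      have ht : 0 ≤ t := by simp [ht_def, hvw a]
      have hua : u a = v a := by simp [hu_def, ha]
      have hu'_eq : (fun k => if k ∈ insert a I then w k else v k)
          = Function.update u a (u a + t) := by
        funext k
        rw [Function.update_apply]
        by_cases hk : k = a
        · subst hk; simp [hua, ht_def, hu_def, ha]
        · simp [hk, Finset.mem_insert, hu_def]
      have hu0 : ∀ k, 0 ≤ u k := by
        intro k; simp only [hu_def]; split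
        · exact le_trans (hv k) (hvw k)
        · exact hv k
      have hvu : ∀ k, v k ≤ u k := by
        intro k; simp only [hu_def]; split
        · exact hvw k
        · exact le_rfl
      have hDu : myD θ v ≤ myD θ u := myD_mono θ v u hv hvu
      have hDu_pos : 0 < myD θ u := lt_of_lt_of_le hDv hDu
      have hDu' : myD θ (fun k => if k ∈ insert a I then w k else v k)
          = myD θ u + t * myE θ a u := by rw [hu'_eq, myD_upd]
      have hsum' : (∑ k, (if k ∈ insert a I then w k else v k)) = (∑ k, u k) + t := by
        have : (∑ k, (if k ∈ insert a I then w k else v k))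
            = ∑ k, Function.update u a (u a + t) k := by
          rw [hu'_eq]
        rw [this, sum_upd']; ring
      have hkey := key_ineq θ u a
      have hE : 0 ≤ myE θ a u := by
        have huu : ∀ k, u k ≤ Function.update u a (u a + 1) k := by
          intro k
          rw [Function.update_apply]
          by_cases hk : k = a
          · subst hk; simp
          · simp [hk]
        have := myD_mono θ u _ hu0 huu
        rw [myD_upd] at this
        linarith
      have hstep : (∑ k, (if k ∈ insert a I then w k else v k))
            / myD θ (fun k => if k ∈ insert a I then w k else v k)
          ≤ (∑ k, u k) / myD θ u := by
        rw [hsum', hDu']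
        rw [div_le_div_iff₀ (by nlinarith) hDu_pos]
        nlinarith [mul_le_mul_of_nonneg_left hkey ht]
      exact le_trans hstep ih
  have := main Finset.univ
  simpa using this

end aux2
end aux

/-- The SPEB of `N` anchors at distances `r_k > 0` and angles `θ_k`:
`S(r,θ) = (Σ_k r_k^{-2}) / (T_s Σ_{j<k} r_j^{-2} r_k^{-2} sin²(θ_j − θ_k))`. -/
noncomputable def SPEB (N : ℕ) (Ts : ℝ) (r θ : Fin N → ℝ) : ℝ :=
  (∑ k, ((r k) ^ 2)⁻¹) /
    (Ts * ∑ j, ∑ k ∈ Finset.univ.filter (fun k => j < k),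
      ((r j) ^ 2)⁻¹ * ((r k) ^ 2)⁻¹ * Real.sin (θ j - θ k) ^ 2)

set_option maxHeartbeats 1000000 in
/-- equation (4.1) of the paper: the GDOP-based sandwich bound
`G(r_min,θ) ≤ S(r,θ) ≤ G(r_max,θ)`. -/
theorem stmt_15 (N : ℕ) (hN : 2 ≤ N) (Ts : ℝ) (hTs : 0 < Ts)
    (r θ : Fin N → ℝ) (hr : ∀ k, 0 < r k)
    (hpos : 0 < ∑ j, ∑ k ∈ Finset.univ.filter (fun k => j < k),
      Real.sin (θ j - θ k) ^ 2)
    (rmin rmax : ℝ)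
    (hmin : rmin = Finset.univ.inf' ⟨⟨0, by omega⟩, Finset.mem_univ _⟩ r)
    (hmax : rmax = Finset.univ.sup' ⟨⟨0, by omega⟩, Finset.mem_univ _⟩ r) :
    (N : ℝ) * rmin ^ 2 / (Ts * ∑ j, ∑ k ∈ Finset.univ.filter (fun k => j < k),
        Real.sin (θ j - θ k) ^ 2) ≤ SPEB N Ts r θ ∧
    SPEB N Ts r θ ≤ (N : ℝ) * rmax ^ 2 /
      (Ts * ∑ j, ∑ k ∈ Finset.univ.filter (fun k => j < k),
        Real.sin (θ j - θ k) ^ 2) := by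
  set S : ℝ := ∑ j, ∑ k ∈ Finset.univ.filter (fun k => j < k),
      Real.sin (θ j - θ k) ^ 2 with hS_def
  set a : Fin N → ℝ := fun k => ((r k) ^ 2)⁻¹ with ha_def
  have ha_pos : ∀ k, 0 < a k := fun k => inv_pos.2 (pow_pos (hr k) 2)
  -- rmin / rmax facts
  have hne : (Finset.univ : Finset (Fin N)).Nonempty := ⟨⟨0, by omega⟩, Finset.mem_univ _⟩
  have hminle : ∀ k, rmin ≤ r k := by
    intro k; rw [hmin]; exact Finset.inf'_le _ (Finset.mem_univ k)
  have hlemax : ∀ k, r k ≤ rmax := by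
    intro k; rw [hmax]; exact Finset.le_sup' _ (Finset.mem_univ k)
  have hrmin_pos : 0 < rmin := by
    obtain ⟨i, -, hi⟩ := Finset.exists_mem_eq_inf' hne r
    rw [hmin, hi]; exact hr i
  have hrmax_pos : 0 < rmax := lt_of_lt_of_le hrmin_pos (le_trans (hminle ⟨0, by omega⟩)
    (hlemax ⟨0, by omega⟩))
  set m : ℝ := (rmax ^ 2)⁻¹ with hm_def
  set M : ℝ := (rmin ^ 2)⁻¹ with hM_def
  have hm_pos : 0 < m := inv_pos.2 (pow_pos hrmax_pos 2)
  have hM_pos : 0 < M := inv_pos.2 (pow_pos hrmin_pos 2)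
  have hma : ∀ k, m ≤ a k := fun k =>
    inv_anti₀ (pow_pos (hr k) 2) (pow_le_pow_left₀ (hr k).le (hlemax k) 2)
  have haM : ∀ k, a k ≤ M := fun k =>
    inv_anti₀ (pow_pos hrmin_pos 2) (pow_le_pow_left₀ hrmin_pos.le (hminle k) 2)
  -- D of a constant function
  have hDconst : ∀ c : ℝ, myD θ (fun _ => c) = c ^ 2 * S := by
    intro c
    rw [myD, hS_def, Finset.mul_sum]
    refine Finset.sum_congr rfl fun j _ => ?_
    rw [Finset.mul_sum]
    exact Finset.sum_congr rfl fun k _ => by ring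
  have hDm_pos : 0 < myD θ (fun _ => m) := by
    rw [hDconst]; positivity
  have hDa_pos : 0 < myD θ a :=
    lt_of_lt_of_le hDm_pos (myD_mono θ _ a (fun _ => hm_pos.le) hma)
  have hsum_const : ∀ c : ℝ, (∑ _k : Fin N, c) = (N : ℝ) * c := by
    intro c; simp [Finset.sum_const, Finset.card_univ, mul_comm]
  have hS_pos : 0 < S := hpos
  have hSPEB : SPEB N Ts r θ = (∑ k, a k) / (Ts * myD θ a) := rfl
  have hTsS : 0 < Ts * S := mul_pos hTs hS_pos
  have hTsDa : 0 < Ts * myD θ a := mul_pos hTs hDa_pos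
  have hsuma_pos : 0 < ∑ k, a k :=
    Finset.sum_pos (fun k _ => ha_pos k) hne
  constructor
  · -- lower bound
    have hchain := chain_ineq θ a (fun _ => M) (fun k => (ha_pos k).le) haM hDa_pos
    rw [hsum_const, hDconst] at hchain
    have hGeq : (N : ℝ) * M / (M ^ 2 * S) = (N : ℝ) * rmin ^ 2 / S := by
      rw [hM_def]
      rw [div_eq_div_iff (by positivity) hS_pos.ne']
      field_simp
    rw [hGeq] at hchain
    rw [hSPEB, div_le_div_iff₀ hTsS hTsDa]
    rw [div_le_div_iff₀ hS_pos hDa_pos] at hchain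
    have h2 := mul_le_mul_of_nonneg_left hchain hTs.le
    linarith
  · -- upper bound
    have hchain := chain_ineq θ (fun _ => m) a (fun _ => hm_pos.le) hma hDm_pos
    rw [hsum_const, hDconst] at hchain
    have hGeq : (N : ℝ) * m / (m ^ 2 * S) = (N : ℝ) * rmax ^ 2 / S := by
      rw [hm_def]
      rw [div_eq_div_iff (by positivity) hS_pos.ne']
      field_simp
    rw [hGeq] at hchain
    rw [hSPEB, div_le_div_iff₀ hTsDa hTsS]
    rw [div_le_div_iff₀ hDa_pos hS_pos] at hchain
    have h2 := mul_le_mul_of_nonneg_left hchain hTs.le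
    linarith
end

section
/- Fix an integer N ≥ 3, reals 0 < d_min < d_max and a constant T_s > 0. (a) For all r_1, …, r_N ∈ [d_min, d_max] and all reals θ_1, …, θ_N such that Σ_{1≤j<k≤N} r_j^{-2} r_k^{-2} sin²(θ_j − θ_k) > 0, the SPEB satisfies S(r,θ) ≥ 4·d_min²/(N·T_s), where S(r,θ) = (Σ_{k=1}^N r_k^{-2}) / (T_s Σ_{1≤j<k≤N} r_j^{-2} r_k^{-2} sin²(θ_j − θ_k)). (b) This bound is attained: with r_k = d_min and θ_k = 2πk/N for k = 1, …, N (the anchors at the vertices of a regular N-gon inscribed in the circle of radius d_min), S(r,θ) = 4·d_min²/(N·T_s). -/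
open Finset Real

private lemma aux_split (N : ℕ) (f : Fin N → ℝ) (j : Fin N) :
    ∑ k, f k = (∑ k ∈ Finset.univ.filter (fun k => j < k), f k)
      + (∑ k ∈ Finset.univ.filter (fun k => k < j), f k) + f j := by
  have h1 : (∑ k ∈ Finset.univ.filter (fun k => j < k), f k)
      + (∑ k ∈ Finset.univ.filter (fun k => ¬ j < k), f k) = ∑ k, f k :=
    Finset.sum_filter_add_sum_filter_not _ _ _
  have h2 : Finset.univ.filter (fun k : Fin N => ¬ j < k)
      = insert j (Finset.univ.filter (fun k => k < j)) := by
    ext k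
    simp only [Finset.mem_filter, Finset.mem_univ, true_and, Finset.mem_insert,
      not_lt, Fin.lt_def, Fin.le_def, Fin.ext_iff]
    omega
  rw [h2, Finset.sum_insert (by simp)] at h1
  linarith

private lemma pair_sum (N : ℕ) (x : Fin N → ℝ) :
    2 * (∑ j, ∑ k ∈ Finset.univ.filter (fun k => j < k), x j * x k)
      = (∑ j, x j)^2 - ∑ j, x j ^ 2 := by
  have hswap : ∑ j, ∑ k ∈ Finset.univ.filter (fun k => k < j), x j * x k
      = ∑ j, ∑ k ∈ Finset.univ.filter (fun k => j < k), x j * x k := by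
    rw [Finset.sum_comm' (s' := fun k => Finset.univ.filter (fun j => k < j))
      (t' := Finset.univ) (by intro j k; simp)]
    apply Finset.sum_congr rfl
    intro j _
    apply Finset.sum_congr rfl
    intro k _
    ring
  have hsq : (∑ j, x j)^2 = ∑ j, ∑ k, x j * x k := by
    rw [sq, Finset.sum_mul_sum]
  have h3 : ∑ j, ∑ k, x j * x k
      = (∑ j, ∑ k ∈ Finset.univ.filter (fun k => j < k), x j * x k)
        + (∑ j, ∑ k ∈ Finset.univ.filter (fun k => k < j), x j * x k)
        + ∑ j, x j ^ 2 := by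
    rw [← Finset.sum_add_distrib, ← Finset.sum_add_distrib]
    apply Finset.sum_congr rfl
    intro j _
    rw [aux_split N (fun k => x j * x k) j]
    ring
  rw [hsq, h3, hswap]
  ring

/-- The key algebraic identity. -/
private lemma B_eq (N : ℕ) (a θ : Fin N → ℝ) :
    ∑ j, ∑ k ∈ Finset.univ.filter (fun k => j < k),
        a j * a k * Real.sin (θ j - θ k) ^ 2
      = ((∑ k, a k)^2 - (∑ k, a k * Real.cos (2 * θ k))^2
          - (∑ k, a k * Real.sin (2 * θ k))^2) / 4 := by
  set c : Fin N → ℝ := fun k => a k * Real.cos (2 * θ k) with hc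
  set s : Fin N → ℝ := fun k => a k * Real.sin (2 * θ k) with hs
  have hterm : ∀ j k, a j * a k * Real.sin (θ j - θ k) ^ 2
      = (a j * a k - c j * c k - s j * s k) / 2 := by
    intro j k
    have h1 : Real.sin (θ j - θ k) ^ 2 = 1/2 - Real.cos (2 * (θ j - θ k)) / 2 := by
      rw [Real.sin_sq, Real.cos_sq]; ring
    have h2 : Real.cos (2 * (θ j - θ k))
        = Real.cos (2 * θ j) * Real.cos (2 * θ k)
          + Real.sin (2 * θ j) * Real.sin (2 * θ k) := by
      rw [show 2 * (θ j - θ k) = 2 * θ j - 2 * θ k by ring, Real.cos_sub]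
    rw [h1, h2]; simp only [hc, hs]; ring
  have hL : ∑ j, ∑ k ∈ Finset.univ.filter (fun k => j < k),
        a j * a k * Real.sin (θ j - θ k) ^ 2
      = ((∑ j, ∑ k ∈ Finset.univ.filter (fun k => j < k), a j * a k)
        - (∑ j, ∑ k ∈ Finset.univ.filter (fun k => j < k), c j * c k)
        - (∑ j, ∑ k ∈ Finset.univ.filter (fun k => j < k), s j * s k)) / 2 := by
    rw [← Finset.sum_sub_distrib, ← Finset.sum_sub_distrib, Finset.sum_div]
    apply Finset.sum_congr rfl
    intro j _
    rw [← Finset.sum_sub_distrib, ← Finset.sum_sub_distrib, Finset.sum_div]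
    exact Finset.sum_congr rfl fun k _ => by rw [hterm j k]
  have hsq : ∑ k, c k ^ 2 + ∑ k, s k ^ 2 = ∑ k, a k ^ 2 := by
    rw [← Finset.sum_add_distrib]
    apply Finset.sum_congr rfl
    intro k _
    have := Real.sin_sq_add_cos_sq (2 * θ k)
    simp only [hc, hs]
    nlinarith [this]
  have pa := pair_sum N a
  have pc := pair_sum N c
  have ps := pair_sum N s
  rw [hL]
  linarith

private lemma exp_sum_zero (N : ℕ) (hN : 3 ≤ N) :
    ∑ k : Fin N, Complex.exp ((4 * π * ((k : ℕ) + 1) / N : ℝ) * Complex.I) = 0 := by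
  have hN0 : (N : ℝ) ≠ 0 := by positivity
  set z : ℂ := Complex.exp ((4 * π / N : ℝ) * Complex.I) with hz
  have hzk : ∀ k : ℕ, z ^ k = Complex.exp ((4 * π * k / N : ℝ) * Complex.I) := by
    intro k
    rw [hz, ← Complex.exp_nat_mul]
    congr 1
    push_cast
    ring
  have hzN : z ^ N = 1 := by
    rw [hzk, show (4 * π * (N:ℝ) / N : ℝ) = 2 * (2 * π) by field_simp; ring,
      show ((2 * (2 * π) : ℝ) : ℂ) * Complex.I = (2 : ℤ) * (2 * π * Complex.I) by
        push_cast; ring]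
    exact Complex.exp_int_mul_two_pi_mul_I 2
  have hz1 : z ≠ 1 := by
    rw [hz, ne_eq, Complex.exp_eq_one_iff]
    push_neg
    intro n hn
    rw [show (n : ℂ) * (2 * ↑π * Complex.I) = (((n : ℝ) * (2 * π) : ℝ) : ℂ) * Complex.I by
      push_cast; ring] at hn
    have h := Complex.ofReal_inj.mp (mul_right_cancel₀ Complex.I_ne_zero hn)
    have hπ := Real.pi_ne_zero
    have h2 : (2 : ℝ) = (n : ℝ) * N := by
      field_simp at h
      refine mul_left_cancel₀ (show (2 * π : ℝ) ≠ 0 by positivity) ?_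
      linear_combination π * h
    have h3 : (2 : ℤ) = n * N := by exact_mod_cast h2
    have h4 : (N : ℤ) ≤ 2 := Int.le_of_dvd (by norm_num) ⟨n, by linarith⟩
    omega
  have hgeom : ∑ i ∈ Finset.range N, z ^ i = 0 := by
    rw [geom_sum_eq hz1, hzN]
    simp
  calc ∑ k : Fin N, Complex.exp ((4 * π * ((k : ℕ) + 1) / N : ℝ) * Complex.I)
      = ∑ k : Fin N, z ^ ((k : ℕ) + 1) := by
        apply Finset.sum_congr rfl
        intro k _
        rw [hzk ((k : ℕ) + 1)]
        norm_num
    _ = z * ∑ k ∈ Finset.range N, z ^ k := by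
        rw [Finset.mul_sum, ← Fin.sum_univ_eq_sum_range (fun i => z * z ^ i) N]
        exact Finset.sum_congr rfl fun k _ => by rw [pow_succ]; ring
    _ = 0 := by rw [hgeom, mul_zero]


/-- Remark 2 of the paper: (a) for anchors with distances in
`[d_min, d_max]`, the SPEB is at least `4 d_min²/(N T_s)`; (b) this bound is
attained by the regular `N`-gon of radius `d_min` (θ_k = 2πk/N, k = 1,…,N). -/
theorem stmt_19 (N : ℕ) (hN : 3 ≤ N) (dmin dmax : ℝ) (h0 : 0 < dmin)
    (hd : dmin < dmax) (Ts : ℝ) (hTs : 0 < Ts) :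
    (∀ r θ : Fin N → ℝ, (∀ k, r k ∈ Set.Icc dmin dmax) →
      0 < ∑ j, ∑ k ∈ Finset.univ.filter (fun k => j < k),
        ((r j) ^ 2)⁻¹ * ((r k) ^ 2)⁻¹ * Real.sin (θ j - θ k) ^ 2 →
      4 * dmin ^ 2 / (N * Ts) ≤ SPEB N Ts r θ) ∧
    SPEB N Ts (fun _ => dmin) (fun k => 2 * π * ((k : ℕ) + 1) / N)
      = 4 * dmin ^ 2 / (N * Ts) := by
  have hN0 : (0 : ℝ) < N := by positivity
  have hNne : (N : ℝ) ≠ 0 := hN0.ne'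
  have hdne : dmin ≠ 0 := h0.ne'
  constructor
  · -- part (a)
    intro r θ hr hB
    set a : Fin N → ℝ := fun k => ((r k) ^ 2)⁻¹ with ha
    set B : ℝ := ∑ j, ∑ k ∈ Finset.univ.filter (fun k => j < k),
        a j * a k * Real.sin (θ j - θ k) ^ 2 with hBdef
    have hrpos : ∀ k, 0 < r k := fun k => lt_of_lt_of_le h0 (hr k).1
    have hapos : ∀ k, 0 < a k := fun k => by
      have := hrpos k
      simp only [ha]; positivity
    have hale : ∀ k, a k ≤ (dmin ^ 2)⁻¹ := by
      intro k
      simp only [ha]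
      exact inv_anti₀ (by positivity) (pow_le_pow_left₀ h0.le (hr k).1 2)
    set A : ℝ := ∑ k, a k with hAdef
    have hApos : 0 < A := by
      have : Nonempty (Fin N) := ⟨⟨0, by omega⟩⟩
      exact Finset.sum_pos (fun k _ => hapos k) Finset.univ_nonempty
    have hAle : dmin ^ 2 * A ≤ (N : ℝ) := by
      have : A ≤ ∑ _k : Fin N, (dmin ^ 2)⁻¹ :=
        Finset.sum_le_sum (fun k _ => hale k)
      rw [Finset.sum_const, Finset.card_univ, Fintype.card_fin, nsmul_eq_mul] at this
      have hd2 : (0:ℝ) < dmin ^ 2 := by positivity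
      calc dmin ^ 2 * A ≤ dmin ^ 2 * ((N : ℝ) * (dmin ^ 2)⁻¹) := by
            exact mul_le_mul_of_nonneg_left this hd2.le
        _ = (N : ℝ) := by field_simp
    have hB4 : 4 * B ≤ A ^ 2 := by
      have := B_eq N a θ
      rw [← hBdef, ← hAdef] at this
      nlinarith [sq_nonneg (∑ k, a k * Real.cos (2 * θ k)),
        sq_nonneg (∑ k, a k * Real.sin (2 * θ k))]
    have hBpos : 0 < B := hB
    unfold SPEB
    rw [div_le_div_iff₀ (by positivity) (by positivity)]
    nlinarith [mul_le_mul_of_nonneg_left hB4 (by positivity : (0:ℝ) ≤ Ts * dmin ^ 2),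
      mul_le_mul_of_nonneg_left hAle (by positivity : (0:ℝ) ≤ Ts * A)]
  · -- part (b)
    have hcos : ∑ k : Fin N, Real.cos (4 * π * ((k : ℕ) + 1) / N) = 0 := by
      have h' : ∑ k : Fin N, Real.cos (4 * π * ((k : ℕ) + 1) / N)
          = (∑ k : Fin N, Complex.exp ((4 * π * ((k : ℕ) + 1) / N : ℝ) * Complex.I)).re := by
        rw [Complex.re_sum]
        exact Finset.sum_congr rfl fun k _ => (Complex.exp_ofReal_mul_I_re _).symm
      rw [h', exp_sum_zero N hN, Complex.zero_re]
    have hsin : ∑ k : Fin N, Real.sin (4 * π * ((k : ℕ) + 1) / N) = 0 := by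
      have h' : ∑ k : Fin N, Real.sin (4 * π * ((k : ℕ) + 1) / N)
          = (∑ k : Fin N, Complex.exp ((4 * π * ((k : ℕ) + 1) / N : ℝ) * Complex.I)).im := by
        rw [Complex.im_sum]
        exact Finset.sum_congr rfl fun k _ => (Complex.exp_ofReal_mul_I_im _).symm
      rw [h', exp_sum_zero N hN, Complex.zero_im]
    unfold SPEB
    have hBe := B_eq N (fun _ => ((dmin : ℝ) ^ 2)⁻¹) (fun k => 2 * π * ((k : ℕ) + 1) / N)
    rw [hBe]
    have e1 : ∀ k : Fin N, (2 : ℝ) * (2 * π * ((k : ℕ) + 1) / N) = 4 * π * ((k : ℕ) + 1) / N := by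
      intro k; ring
    have hc0 : ∑ k : Fin N, ((dmin : ℝ) ^ 2)⁻¹ * Real.cos (2 * (2 * π * ((k : ℕ) + 1) / N)) = 0 := by
      simp_rw [e1]
      rw [← Finset.mul_sum, hcos, mul_zero]
    have hs0 : ∑ k : Fin N, ((dmin : ℝ) ^ 2)⁻¹ * Real.sin (2 * (2 * π * ((k : ℕ) + 1) / N)) = 0 := by
      simp_rw [e1]
      rw [← Finset.mul_sum, hsin, mul_zero]
    rw [hc0, hs0]
    rw [Finset.sum_const, Finset.card_univ, Fintype.card_fin, nsmul_eq_mul]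
    field_simp
    ring
end
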